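/- Every 17-vertex C4-free Halin graph H satisfies e(H) ≤ 26. -/

import Mathlib

open SimpleGraph

/-- Degree of a vertex as the `ncard` of its neighbour set. -/
noncomputable def ncDeg {V : Type*} (G : SimpleGraph V) (v : V) : ℕ :=
  (G.neighborSet v).ncard

/-- A leaf is a vertex of degree one. -/
def IsLeaf {V : Type*} (G : SimpleGraph V) (v : V) : Prop :=
  ncDeg G v = 1

/-- A Halin graph, presented by its characteristic tree `T` and outer cycle `C`.
The underlying graph is `T ⊔ C`.  The outer cycle is a `2`-regular connected graph
whose support is exactly the set of leaves of `T`, every non-leaf of `T` has degree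
at least three, and the cycle is compatible with a planar embedding: for every edge
`uv` of `T`, the leaves lying in each component of `T - uv` are consecutive on the
cycle, i.e. they induce a connected subgraph of the cycle. -/
structure HalinGraph (V : Type*) [Fintype V] : Type _ where
  /-- the characteristic tree -/
  T : SimpleGraph V
  /-- the outer cycle -/
  C : SimpleGraph V
  tree_isTree : T.IsTree
  four_le_card : 4 ≤ Fintype.card V
  nonleaf_degree : ∀ v : V, ¬ IsLeaf T v → 3 ≤ ncDeg T v
  support_C : C.support = {v : V | IsLeaf T v}
  two_regular : ∀ v ∈ C.support, ncDeg C v = 2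
  cycle_connected : (C.induce C.support).Connected
  planar : ∀ u v : V, T.Adj u v →
    (C.induce {x : V | IsLeaf T x ∧ (T.deleteEdges {s(u, v)}).Reachable u x}).Connected

/-- The Halin graph itself: the (edge-disjoint) union of the tree and the outer cycle. -/
def HalinGraph.graph {V : Type*} [Fintype V] (H : HalinGraph V) : SimpleGraph V :=
  H.T ⊔ H.C

/-- Number of edges of a graph. -/
noncomputable def eCount {V : Type*} (G : SimpleGraph V) : ℕ :=
  G.edgeSet.ncard

/-- A graph is `C₄`-free iff it contains no cycle of length `4`. -/
def C4Free {V : Type*} (G : SimpleGraph V) : Prop :=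
  ∀ (v : V) (w : G.Walk v v), w.IsCycle → w.length ≠ 4

/-- A semi-branching vertex of the characteristic tree: a non-leaf with at least one
leaf neighbour and at least two non-leaf neighbours. -/
def SemiBranching {V : Type*} (T : SimpleGraph V) (v : V) : Prop :=
  ¬ IsLeaf T v ∧ (∃ x, T.Adj v x ∧ IsLeaf T x) ∧
    ∃ x y : V, x ≠ y ∧ T.Adj v x ∧ T.Adj v y ∧ ¬ IsLeaf T x ∧ ¬ IsLeaf T y


/-! ### Auxiliary lemmas -/

section Aux

open SimpleGraph

variable {V : Type*}

lemma walk_closed {G : SimpleGraph V} {s : Set V}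
    (hs : ∀ a ∈ s, ∀ b, G.Adj a b → b ∈ s) :
    ∀ {a z : V}, G.Walk a z → a ∈ s → z ∈ s := by
  intro a z w
  induction w with
  | nil => exact fun h => h
  | cons h p ih => exact fun ha => ih (hs _ ha _ h)

lemma C4Free.no_c4 {G : SimpleGraph V} (hfree : C4Free G) {a b c d : V}
    (hab : G.Adj a b) (hbc : G.Adj b c) (hcd : G.Adj c d) (hda : G.Adj d a)
    (hac : a ≠ c) (hbd : b ≠ d) : False := by
  refine hfree a (.cons hab (.cons hbc (.cons hcd (.cons hda .nil)))) ?_ rfl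
  simp [SimpleGraph.Walk.isCycle_def, SimpleGraph.Walk.isTrail_def, List.nodup_cons,
    Sym2.eq_iff, hab.ne, hbc.ne, hcd.ne, hda.ne, hab.ne', hbc.ne', hcd.ne', hda.ne',
    hac, hbd, hac.symm, hbd.symm]

lemma conn_card_le {W : Type*} [Fintype W] (G : SimpleGraph W) (h : G.Connected) :
    Fintype.card W ≤ G.edgeSet.ncard + 1 := by
  classical
  obtain ⟨r⟩ := h.nonempty
  have hsel : ∀ v : W, v ≠ r → ∃ b, G.Adj v b ∧ G.dist b r < G.dist v r := by
    intro v hv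
    have hreach : G.Reachable v r := h.preconnected v r
    have hd : G.dist v r ≠ 0 := by
      rw [SimpleGraph.dist_ne_zero_iff_ne_and_reachable]; exact ⟨hv, hreach⟩
    obtain ⟨p, hp⟩ := hreach.exists_walk_length_eq_dist
    cases p with
    | nil => exact absurd rfl hv
    | @cons _ b _ hadj q =>
      refine ⟨b, hadj, ?_⟩
      have h1 : G.dist b r ≤ q.length := SimpleGraph.dist_le q
      simp only [Walk.length_cons] at hp
      omega
  set g : W → Sym2 W := fun v => if hv : v ≠ r then s(v, (hsel v hv).choose) else s(v, v)
    with hg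
  have hgv : ∀ v (hv : v ≠ r), g v = s(v, (hsel v hv).choose) := by
    intro v hv; simp [hg, hv]
  have hinj : Set.InjOn g {v | v ≠ r} := by
    intro v hv w hw hvw
    rw [hgv v hv, hgv w hw, Sym2.eq_iff] at hvw
    rcases hvw with ⟨h1, _⟩ | ⟨h1, h2⟩
    · exact h1
    · exfalso
      have d1 := (hsel v hv).choose_spec.2
      have d2 := (hsel w hw).choose_spec.2
      rw [h2] at d1; rw [← h1] at d2; omega
  have hsubE : g '' {v | v ≠ r} ⊆ G.edgeSet := by
    rintro e ⟨v, hv, rfl⟩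
    rw [hgv v hv]
    exact (hsel v hv).choose_spec.1
  have h1 : ({v | v ≠ r} : Set W).ncard = Fintype.card W - 1 := by
    have : ({v | v ≠ r} : Set W).toFinset = Finset.univ.erase r := by
      ext x; simp
    rw [Set.ncard_eq_toFinset_card', this, Finset.card_erase_of_mem (Finset.mem_univ r),
      Finset.card_univ]
  have h2 : (g '' {v | v ≠ r}).ncard = ({v | v ≠ r} : Set W).ncard :=
    Set.ncard_image_of_injOn hinj
  have h3 : (g '' {v | v ≠ r}).ncard ≤ G.edgeSet.ncard :=
    Set.ncard_le_ncard hsubE (Set.toFinite _)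
  have hpos : 1 ≤ Fintype.card W := Fintype.card_pos_iff.mpr ⟨r⟩
  omega

/-- dichotomy: after deleting an edge, everything is reachable from one endpoint. -/
lemma reach_side {G : SimpleGraph V} (hG : G.Connected) (u v z : V) :
    (G.deleteEdges {s(u,v)}).Reachable u z ∨ (G.deleteEdges {s(u,v)}).Reachable v z := by
  obtain ⟨w⟩ := hG.preconnected u z
  have aux : ∀ {a z : V}, G.Walk a z →
      ((G.deleteEdges {s(u,v)}).Reachable u a ∨ (G.deleteEdges {s(u,v)}).Reachable v a) →
      ((G.deleteEdges {s(u,v)}).Reachable u z ∨ (G.deleteEdges {s(u,v)}).Reachable v z) := by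
    intro a z w
    induction w with
    | nil => exact fun h => h
    | @cons a b z hab w ih =>
      intro ha
      refine ih ?_
      by_cases he : s(a, b) = s(u, v)
      · rw [Sym2.eq_iff] at he
        rcases he with ⟨rfl, rfl⟩ | ⟨rfl, rfl⟩
        · right; rfl
        · left; rfl
      · have hadj : (G.deleteEdges {s(u,v)}).Adj a b := by
          rw [SimpleGraph.deleteEdges_adj]; exact ⟨hab, by simpa using he⟩
        rcases ha with h | h
        · exact Or.inl (h.trans hadj.reachable)
        · exact Or.inr (h.trans hadj.reachable)
  exact aux w (Or.inl (SimpleGraph.Reachable.refl u))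

/-- an edge on a path in an acyclic graph separates the endpoints of the path -/
lemma not_reach_of_edge_on_path {G : SimpleGraph V} (hG : G.IsAcyclic) {a b : V}
    (p : G.Walk a b) (hp : p.IsPath) {e : Sym2 V} (he : e ∈ p.edges) :
    ¬ (G.deleteEdges {e}).Reachable a b := by
  rintro ⟨w⟩
  classical
  set q := w.toPath with hq
  have hsub : ∀ e' ∈ (q : (G.deleteEdges {e}).Walk a b).edges, e' ∈ G.edgeSet := by
    intro e' he'
    have := Walk.edges_subset_edgeSet _ he'
    rw [edgeSet_deleteEdges] at this
    exact this.1
  have hnotmem : e ∉ (q : (G.deleteEdges {e}).Walk a b).edges := by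
    intro hmem
    have := Walk.edges_subset_edgeSet _ hmem
    rw [edgeSet_deleteEdges] at this
    exact this.2 rfl
  have htrans : ((q : (G.deleteEdges {e}).Walk a b).transfer G hsub).IsPath :=
    q.2.transfer hsub
  have huniq := hG.path_unique ⟨p, hp⟩ ⟨_, htrans⟩
  have hmem : e ∈ ((q : (G.deleteEdges {e}).Walk a b).transfer G hsub).edges := by
    have : p = (q : (G.deleteEdges {e}).Walk a b).transfer G hsub :=
      congrArg Subtype.val huniq
    rw [← this]; exact he
  rw [Walk.edges_transfer] at hmem
  exact hnotmem hmem

end Aux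

namespace HalinGraph

open SimpleGraph

variable {V : Type*} [Fintype V] (H : HalinGraph V)

/-- the unique tree-neighbour of a leaf -/
noncomputable def par (x : V) : V :=
  if h : (H.T.neighborSet x).ncard = 1 then (Set.ncard_eq_one.mp h).choose else x

lemma nbset_eq {x : V} (hx : IsLeaf H.T x) : H.T.neighborSet x = {H.par x} := by
  have h : (H.T.neighborSet x).ncard = 1 := hx
  rw [par, dif_pos h]
  exact (Set.ncard_eq_one.mp h).choose_spec

lemma adj_par {x : V} (hx : IsLeaf H.T x) : H.T.Adj x (H.par x) := by
  have h : H.par x ∈ H.T.neighborSet x := by rw [H.nbset_eq hx]; exact rfl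
  exact h

lemma eq_par {x y : V} (hx : IsLeaf H.T x) (hxy : H.T.Adj x y) : y = H.par x := by
  have h1 : y ∈ H.T.neighborSet x := hxy
  rw [H.nbset_eq hx] at h1; exact h1

lemma par_not_leaf {x : V} (hx : IsLeaf H.T x) : ¬ IsLeaf H.T (H.par x) := by
  classical
  intro hp
  have hpx : x = H.par (H.par x) := H.eq_par hp (H.adj_par hx).symm
  have hclosed : ∀ a ∈ ({x, H.par x} : Set V), ∀ b, H.T.Adj a b →
      b ∈ ({x, H.par x} : Set V) := by
    rintro a (rfl | rfl) b hab
    · right; exact H.eq_par hx hab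
    · left; rw [H.eq_par hp hab, ← hpx]
  have hall : ∀ z : V, z ∈ ({x, H.par x} : Set V) := by
    intro z
    obtain ⟨w⟩ := H.tree_isTree.isConnected.preconnected x z
    exact walk_closed hclosed w (Or.inl rfl)
  have hsub : (Finset.univ : Finset V) ⊆ {x, H.par x} := by
    intro z _
    have := hall z
    simp only [Set.mem_insert_iff, Set.mem_singleton_iff] at this
    rcases this with rfl | rfl
    · exact Finset.mem_insert_self _ _
    · exact Finset.mem_insert_of_mem (Finset.mem_singleton_self _)
  have hcard : Fintype.card V ≤ 2 := by
    calc Fintype.card V = Finset.univ.card := rfl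
    _ ≤ ({x, H.par x} : Finset V).card := Finset.card_le_card hsub
    _ ≤ 2 := Finset.card_insert_le _ _ |>.trans (by simp)
  have := H.four_le_card
  omega

lemma leaf_of_cadj {x y : V} (hxy : H.C.Adj x y) : IsLeaf H.T x := by
  have hx : x ∈ H.C.support := ⟨y, hxy⟩
  rw [H.support_C] at hx
  exact hx

lemma cadj_pair {x : V} (hx : IsLeaf H.T x) :
    ∃ p n : V, p ≠ n ∧ H.C.neighborSet x = {p, n} := by
  have hx' : x ∈ H.C.support := by rw [H.support_C]; exact hx
  exact Set.ncard_eq_two.mp (H.two_regular x hx')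

lemma exists_bedge (hfree : C4Free H.graph) {x : V} (hx : IsLeaf H.T x) :
    ∃ y, H.C.Adj x y ∧ H.par y ≠ H.par x := by
  obtain ⟨p, n, hpn, hset⟩ := H.cadj_pair hx
  have hp : H.C.Adj x p := by
    have : p ∈ H.C.neighborSet x := by rw [hset]; left; rfl
    exact this
  have hn : H.C.Adj x n := by
    have : n ∈ H.C.neighborSet x := by rw [hset]; right; rfl
    exact this
  by_contra hcon
  push_neg at hcon
  have hpp : H.par p = H.par x := hcon p hp
  have hnn : H.par n = H.par x := hcon n hn
  have hpleaf : IsLeaf H.T p := H.leaf_of_cadj hp.symm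
  have hnleaf : IsLeaf H.T n := H.leaf_of_cadj hn.symm
  have h1 : H.graph.Adj (H.par x) p := Or.inl (by rw [← hpp]; exact (H.adj_par hpleaf).symm)
  have h2 : H.graph.Adj p x := Or.inr hp.symm
  have h3 : H.graph.Adj x n := Or.inr hn
  have h4 : H.graph.Adj n (H.par x) := Or.inl (by rw [← hnn]; exact H.adj_par hnleaf)
  exact hfree.no_c4 h1 h2 h3 h4
    (fun h => H.par_not_leaf hx (by rw [h]; exact hx)) hpn

lemma not_adj_pars (hfree : C4Free H.graph) {x y : V} (hxy : H.C.Adj x y)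
    (hne : H.par x ≠ H.par y) : ¬ H.T.Adj (H.par x) (H.par y) := by
  intro hadj
  have hx : IsLeaf H.T x := H.leaf_of_cadj hxy
  have hy : IsLeaf H.T y := H.leaf_of_cadj hxy.symm
  have h1 : H.graph.Adj (H.par x) x := Or.inl (H.adj_par hx).symm
  have h2 : H.graph.Adj x y := Or.inr hxy
  have h3 : H.graph.Adj y (H.par y) := Or.inl (H.adj_par hy)
  have h4 : H.graph.Adj (H.par y) (H.par x) := Or.inl hadj.symm
  exact hfree.no_c4 h1 h2 h3 h4
    (fun h => H.par_not_leaf hx (h ▸ hy)) (fun h => H.par_not_leaf hy (h.symm ▸ hx))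

lemma sep_edge {x y : V} (hx : IsLeaf H.T x) (hy : IsLeaf H.T y)
    (hne : H.par x ≠ H.par y) :
    ∃ z, H.T.Adj (H.par x) z ∧ ¬ IsLeaf H.T z ∧
      ¬ (H.T.deleteEdges {s(H.par x, z)}).Reachable x y := by
  classical
  obtain ⟨w0⟩ := H.tree_isTree.isConnected.preconnected (H.par x) (H.par y)
  obtain ⟨w, hwp⟩ := w0.toPath
  obtain ⟨z, hadj, w1, rfl⟩ := Walk.exists_eq_cons_of_ne hne w
  rw [Walk.cons_isPath_iff] at hwp
  obtain ⟨hw1p, hpxnot⟩ := hwp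
  have hzleaf : ¬ IsLeaf H.T z := by
    intro hz
    have hzy : z ≠ H.par y := fun h => H.par_not_leaf hy (h ▸ hz)
    obtain ⟨z2, hadj2, w2, rfl⟩ := Walk.exists_eq_cons_of_ne hzy w1
    have h1 : z2 = H.par z := H.eq_par hz hadj2
    have h2 : H.par x = H.par z := H.eq_par hz hadj.symm
    apply hpxnot
    rw [Walk.support_cons]
    right
    rw [h2, ← h1]
    exact w2.start_mem_support
  refine ⟨z, hadj, hzleaf, ?_⟩
  intro hr
  have r1 : (H.T.deleteEdges {s(H.par x, z)}).Adj x (H.par x) := by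
    rw [deleteEdges_adj]
    refine ⟨H.adj_par hx, ?_⟩
    simp only [Set.mem_singleton_iff, Sym2.eq_iff]
    rintro (⟨h1, h2⟩ | ⟨h1, h2⟩)
    · exact (H.adj_par hx).ne h1
    · exact hzleaf (h1 ▸ hx)
  have r2 : (H.T.deleteEdges {s(H.par x, z)}).Adj y (H.par y) := by
    rw [deleteEdges_adj]
    refine ⟨H.adj_par hy, ?_⟩
    simp only [Set.mem_singleton_iff, Sym2.eq_iff]
    rintro (⟨h1, h2⟩ | ⟨h1, h2⟩)
    · exact H.par_not_leaf hx (h1 ▸ hy)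
    · exact hzleaf (h1 ▸ hy)
  have hr2 : (H.T.deleteEdges {s(H.par x, z)}).Reachable (H.par x) (H.par y) :=
    (r1.symm.reachable.trans hr).trans r2.reachable
  have hsep := not_reach_of_edge_on_path H.tree_isTree.IsAcyclic
    (Walk.cons hadj w1) (by rw [Walk.cons_isPath_iff]; exact ⟨hw1p, hpxnot⟩)
    (e := s(H.par x, z)) (by simp)
  exact hsep hr2

set_option maxHeartbeats 1000000 in
lemma cut_le_two {u v : V} (huv : H.T.Adj u v) :
    {p : V × V | p.1 ∈ {x : V | IsLeaf H.T x ∧ (H.T.deleteEdges {s(u,v)}).Reachable u x} ∧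
      p.2 ∉ {x : V | IsLeaf H.T x ∧ (H.T.deleteEdges {s(u,v)}).Reachable u x} ∧
      H.C.Adj p.1 p.2}.ncard ≤ 2 := by
  classical
  set S := {x : V | IsLeaf H.T x ∧ (H.T.deleteEdges {s(u,v)}).Reachable u x} with hS
  have hconn : (H.C.induce S).Connected := H.planar u v huv
  set Gi := H.C.induce S with hGi
  set s := S.toFinset with hs
  have hdeg : ∀ x ∈ s, (H.C.neighborFinset x).card = 2 := by
    intro x hx
    rw [Set.mem_toFinset] at hx
    have hx' : x ∈ H.C.support := by rw [H.support_C]; exact hx.1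
    have h2 := H.two_regular x hx'
    unfold ncDeg at h2
    rwa [Set.ncard_eq_toFinset_card', ← neighborFinset_def] at h2
  have hdegGi : ∀ (x : V) (hx : x ∈ S),
      Gi.degree ⟨x, hx⟩ = ((H.C.neighborFinset x).filter (· ∈ S)).card := by
    intro x hx
    show (Gi.neighborFinset ⟨x,hx⟩).card = _
    refine Finset.card_bij (fun a _ => (a : V)) ?_ ?_ ?_
    · intro a ha
      rw [mem_neighborFinset] at ha
      simp only [hGi, comap_adj, Function.Embedding.coe_subtype] at ha
      simp only [Finset.mem_filter, mem_neighborFinset]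
      exact ⟨ha, a.2⟩
    · intro a _ b _ hab
      exact Subtype.ext hab
    · intro b hb
      simp only [Finset.mem_filter, mem_neighborFinset] at hb
      refine ⟨⟨b, hb.2⟩, ?_, rfl⟩
      simp only [mem_neighborFinset, hGi, comap_adj, Function.Embedding.coe_subtype]
      exact hb.1
  have hhs : ∑ a : ↥S, Gi.degree a = 2 * Gi.edgeFinset.card :=
    Gi.sum_degrees_eq_twice_card_edges
  have hcc : Fintype.card ↥S ≤ Gi.edgeSet.ncard + 1 := conn_card_le Gi hconn
  have hccE : Fintype.card ↥S ≤ Gi.edgeFinset.card + 1 := by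
    rwa [Set.ncard_eq_toFinset_card', ← edgeFinset] at hcc
  have hcardS : Fintype.card ↥S = s.card := (Set.toFinset_card S).symm
  have hsumin : ∑ x ∈ s, ((H.C.neighborFinset x).filter (· ∈ S)).card
      = 2 * Gi.edgeFinset.card := by
    rw [← hhs]
    rw [Finset.sum_subtype s (fun x => Set.mem_toFinset)
      (fun x => ((H.C.neighborFinset x).filter (· ∈ S)).card)]
    apply Finset.sum_congr rfl
    intro a _
    exact (hdegGi a a.2).symm
  have hio : ∀ x ∈ s, ((H.C.neighborFinset x).filter (· ∈ S)).card
      + ((H.C.neighborFinset x).filter (· ∉ S)).card = 2 := by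
    intro x hx
    rw [Finset.card_filter_add_card_filter_not]
    exact hdeg x hx
  have hncard : {p : V × V | p.1 ∈ S ∧ p.2 ∉ S ∧ H.C.Adj p.1 p.2}.ncard
      = (Finset.univ.filter fun p : V × V => p.1 ∈ S ∧ p.2 ∉ S ∧ H.C.Adj p.1 p.2).card := by
    rw [Set.ncard_eq_toFinset_card']
    congr 1
    ext p
    simp
  have hcut : (Finset.univ.filter fun p : V × V =>
      p.1 ∈ S ∧ p.2 ∉ S ∧ H.C.Adj p.1 p.2).card
      = ∑ x ∈ s, ((H.C.neighborFinset x).filter (· ∉ S)).card := by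
    rw [Finset.card_eq_sum_card_fiberwise (f := Prod.fst) (t := s)
      (by intro p hp; rw [Finset.mem_coe, Finset.mem_filter] at hp; rw [Finset.mem_coe, Set.mem_toFinset]; exact hp.2.1)]
    apply Finset.sum_congr rfl
    intro x hx
    apply Finset.card_bij (fun p _ => p.2)
    · intro p hp
      simp only [Finset.mem_filter, Finset.mem_univ, true_and] at hp
      obtain ⟨⟨h1, h2, h3⟩, h4⟩ := hp
      simp only [Finset.mem_filter, mem_neighborFinset]
      rw [← h4]
      exact ⟨h3, h2⟩
    · intro p hp q hq hpq
      simp only [Finset.mem_filter, Finset.mem_univ, true_and] at hp hq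
      exact Prod.ext (hp.2.trans hq.2.symm) hpq
    · intro b hb
      simp only [Finset.mem_filter, mem_neighborFinset] at hb
      rw [Set.mem_toFinset] at hx
      exact ⟨(x, b), by simp [hx, hb.2, hb.1], rfl⟩
  have htot : ∑ x ∈ s, (((H.C.neighborFinset x).filter (· ∈ S)).card
      + ((H.C.neighborFinset x).filter (· ∉ S)).card) = 2 * s.card := by
    rw [Finset.sum_congr rfl hio, Finset.sum_const, smul_eq_mul, mul_comm]
  rw [Finset.sum_add_distrib, hsumin] at htot
  rw [hncard, hcut]
  omega

end HalinGraph


namespace HalinGraph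

open SimpleGraph

variable {V : Type*} [Fintype V] (H : HalinGraph V)

set_option maxHeartbeats 1600000 in
lemma leaf_le_ten (hcard : Fintype.card V = 17) (hfree : C4Free H.graph) :
    {x : V | IsLeaf H.T x}.ncard ≤ 10 := by
  classical
  set Lf := Finset.univ.filter (fun x => IsLeaf H.T x) with hLf
  have hL : {x : V | IsLeaf H.T x}.ncard = Lf.card := by
    rw [Set.ncard_eq_toFinset_card']
    congr 1
    ext x
    simp [hLf]
  have htree : H.T.edgeFinset.card = 16 := by
    have h := H.tree_isTree.card_edgeFinset
    omega
  set P : Sym2 V → Prop := fun e => ∀ w ∈ e, ¬ IsLeaf H.T w with hP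
  set EI := H.T.edgeFinset.filter P with hEI
  set EL := H.T.edgeFinset.filter (fun e => ¬ P e) with hEL
  have hpart : EI.card + EL.card = 16 := by
    rw [hEI, hEL, Finset.card_filter_add_card_filter_not, htree]
  have hELcard : EL.card = Lf.card := by
    symm
    refine Finset.card_bij (fun x _ => s(x, H.par x)) ?_ ?_ ?_
    · intro x hx
      rw [hLf, Finset.mem_filter] at hx
      have hleaf := hx.2
      rw [hEL, Finset.mem_filter]
      constructor
      · rw [mem_edgeFinset, mem_edgeSet]; exact H.adj_par hleaf
      · intro hPe
        exact hPe x (by rw [Sym2.mem_iff]; left; rfl) hleaf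
    · intro x hx y hy hxy
      rw [hLf, Finset.mem_filter] at hx hy
      rw [Sym2.eq_iff] at hxy
      rcases hxy with ⟨h1, _⟩ | ⟨h1, h2⟩
      · exact h1
      · exact absurd (h1 ▸ hx.2) (H.par_not_leaf hy.2)
    · intro e he
      rw [hEL, Finset.mem_filter] at he
      obtain ⟨he1, he2⟩ := he
      simp only [hP, not_forall, not_not, exists_prop] at he2
      obtain ⟨w, hw, hwleaf⟩ := he2
      induction e using Sym2.ind with
      | _ a b =>
        rw [mem_edgeFinset, mem_edgeSet] at he1
        rw [Sym2.mem_iff] at hw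
        rcases hw with rfl | rfl
        · refine ⟨w, ?_, ?_⟩
          · rw [hLf, Finset.mem_filter]; exact ⟨Finset.mem_univ _, hwleaf⟩
          · show s(w, H.par w) = _
            rw [← H.eq_par hwleaf he1]
        · refine ⟨w, ?_, ?_⟩
          · rw [hLf, Finset.mem_filter]; exact ⟨Finset.mem_univ _, hwleaf⟩
          · show s(w, H.par w) = _
            rw [Sym2.eq_swap, ← H.eq_par hwleaf he1.symm]
  set Bf := Finset.univ.filter
    (fun e => e ∈ H.C.edgeSet ∧ ∃ x y, e = s(x,y) ∧ H.par x ≠ H.par y) with hBf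
  set Cross : Sym2 V → Sym2 V → Prop :=
    fun b e => ∃ x y, b = s(x,y) ∧ ¬ (H.T.deleteEdges {e}).Reachable x y with hCross
  -- every leaf lies on a boundary edge
  have hcover : Lf.card ≤ 2 * Bf.card := by
    have hsub : Lf ⊆ Bf.biUnion (fun e => Finset.univ.filter (· ∈ e)) := by
      intro x hx
      rw [hLf, Finset.mem_filter] at hx
      obtain ⟨y, hxy, hpne⟩ := H.exists_bedge hfree hx.2
      rw [Finset.mem_biUnion]
      refine ⟨s(x,y), ?_, ?_⟩
      · rw [hBf, Finset.mem_filter]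
        exact ⟨Finset.mem_univ _, (H.C.mem_edgeSet).mpr hxy, x, y, rfl, hpne.symm⟩
      · rw [Finset.mem_filter]
        exact ⟨Finset.mem_univ _, by rw [Sym2.mem_iff]; left; rfl⟩
    calc Lf.card ≤ (Bf.biUnion (fun e => Finset.univ.filter (· ∈ e))).card :=
          Finset.card_le_card hsub
      _ ≤ ∑ e ∈ Bf, (Finset.univ.filter (· ∈ e)).card := Finset.card_biUnion_le
      _ ≤ ∑ _e ∈ Bf, 2 := by
          apply Finset.sum_le_sum
          intro e _
          induction e using Sym2.ind with
          | _ a b =>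
            have hsub2 : Finset.univ.filter (· ∈ s(a,b)) ⊆ {a, b} := by
              intro w hw
              rw [Finset.mem_filter, Sym2.mem_iff] at hw
              rcases hw.2 with rfl | rfl
              · exact Finset.mem_insert_self _ _
              · exact Finset.mem_insert_of_mem (Finset.mem_singleton_self _)
            have h1 := Finset.card_le_card hsub2
            have h2 : ({a, b} : Finset V).card ≤ 2 :=
              (Finset.card_insert_le _ _).trans (by simp)
            omega
      _ = 2 * Bf.card := by rw [Finset.sum_const, smul_eq_mul, mul_comm]
  -- each boundary edge crosses at least two internal edges
  have hlower : ∀ b ∈ Bf, 2 ≤ (EI.filter (fun e => Cross b e)).card := by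
    intro b hb
    rw [hBf, Finset.mem_filter] at hb
    obtain ⟨-, hbC, x, y, rfl, hne⟩ := hb
    rw [mem_edgeSet] at hbC
    have hx : IsLeaf H.T x := H.leaf_of_cadj hbC
    have hy : IsLeaf H.T y := H.leaf_of_cadj hbC.symm
    have hnadj : ¬ H.T.Adj (H.par x) (H.par y) := H.not_adj_pars hfree hbC hne
    obtain ⟨z, hz1, hz2, hz3⟩ := H.sep_edge hx hy hne
    obtain ⟨z', hz1', hz2', hz3'⟩ := H.sep_edge hy hx hne.symm
    have hne12 : s(H.par x, z) ≠ s(H.par y, z') := by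
      intro h
      rw [Sym2.eq_iff] at h
      rcases h with ⟨h1, _⟩ | ⟨h1, h2⟩
      · exact hne h1
      · rw [← h1] at hz1'
        exact hnadj hz1'.symm
    have hmem1 : s(H.par x, z) ∈ EI.filter (fun e => Cross s(x,y) e) := by
      rw [Finset.mem_filter, hEI, Finset.mem_filter]
      refine ⟨⟨?_, ?_⟩, x, y, rfl, hz3⟩
      · rw [mem_edgeFinset]; exact (H.T.mem_edgeSet).mpr hz1
      · intro w hw
        rw [Sym2.mem_iff] at hw
        rcases hw with rfl | rfl
        · exact H.par_not_leaf hx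
        · exact hz2
    have hmem2 : s(H.par y, z') ∈ EI.filter (fun e => Cross s(x,y) e) := by
      rw [Finset.mem_filter, hEI, Finset.mem_filter]
      refine ⟨⟨?_, ?_⟩, y, x, Sym2.eq_swap.symm, hz3'⟩
      · rw [mem_edgeFinset]; exact (H.T.mem_edgeSet).mpr hz1'
      · intro w hw
        rw [Sym2.mem_iff] at hw
        rcases hw with rfl | rfl
        · exact H.par_not_leaf hy
        · exact hz2'
    have hpair : ({s(H.par x, z), s(H.par y, z')} : Finset (Sym2 V))
        ⊆ EI.filter (fun e => Cross s(x,y) e) := by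
      intro w hw
      rcases Finset.mem_insert.mp hw with rfl | hw
      · exact hmem1
      · rw [Finset.mem_singleton] at hw
        subst hw
        exact hmem2
    have h2 := Finset.card_le_card hpair
    rwa [Finset.card_insert_of_notMem (by simpa using hne12), Finset.card_singleton] at h2
  -- each internal edge is crossed by at most two boundary edges
  have hupper : ∀ e ∈ EI, (Bf.filter (fun b => Cross b e)).card ≤ 2 := by
    intro e he
    rw [hEI, Finset.mem_filter] at he
    obtain ⟨he1, heP⟩ := he
    induction e using Sym2.ind with
    | _ u v =>
      have huv : H.T.Adj u v := (H.T.mem_edgeSet).mp (mem_edgeFinset.mp he1)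
      set S := {x : V | IsLeaf H.T x ∧ (H.T.deleteEdges {s(u,v)}).Reachable u x} with hSdef
      have hcut := H.cut_le_two huv
      have hncard : {p : V × V | p.1 ∈ S ∧ p.2 ∉ S ∧ H.C.Adj p.1 p.2}.ncard
          = (Finset.univ.filter fun p : V × V => p.1 ∈ S ∧ p.2 ∉ S ∧ H.C.Adj p.1 p.2).card := by
        rw [Set.ncard_eq_toFinset_card']
        congr 1
        ext p
        simp
      rw [← hSdef, hncard] at hcut
      set cutF := Finset.univ.filter
        (fun p : V × V => p.1 ∈ S ∧ p.2 ∉ S ∧ H.C.Adj p.1 p.2) with hcutF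
      have hsub : Bf.filter (fun b => Cross b s(u,v)) ⊆ cutF.image (fun p => s(p.1, p.2)) := by
        intro b hb
        rw [Finset.mem_filter] at hb
        obtain ⟨hbB, hbCr⟩ := hb
        rw [hBf, Finset.mem_filter] at hbB
        obtain ⟨-, hbC, -⟩ := hbB
        obtain ⟨x, y, rfl, hnr⟩ := hbCr
        rw [H.C.mem_edgeSet] at hbC
        have hx : IsLeaf H.T x := H.leaf_of_cadj hbC
        have hy : IsLeaf H.T y := H.leaf_of_cadj hbC.symm
        have hTconn : H.T.Connected := H.tree_isTree.isConnected
        rcases reach_side hTconn u v x with hux | hvx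
        · have hvy : ¬ (H.T.deleteEdges {s(u,v)}).Reachable u y := by
            intro huy
            exact hnr (hux.symm.trans huy)
          rw [Finset.mem_image]
          refine ⟨(x, y), ?_, rfl⟩
          rw [hcutF, Finset.mem_filter]
          exact ⟨Finset.mem_univ _, ⟨hx, hux⟩, fun hyS => hvy hyS.2, hbC⟩
        · have huyr : (H.T.deleteEdges {s(u,v)}).Reachable u y := by
            rcases reach_side hTconn u v y with huy | hvy
            · exact huy
            · exact absurd (hvx.symm.trans hvy) hnr
          rw [Finset.mem_image]
          refine ⟨(y, x), ?_, Sym2.eq_swap⟩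
          rw [hcutF, Finset.mem_filter]
          refine ⟨Finset.mem_univ _, ⟨hy, huyr⟩, ?_, hbC.symm⟩
          intro hxS
          have hx2 : (H.T.deleteEdges {s(u,v)}).Reachable u x := hxS.2
          exact hnr (hx2.symm.trans huyr)
      calc (Bf.filter (fun b => Cross b s(u,v))).card
          ≤ (cutF.image (fun p => s(p.1, p.2))).card := Finset.card_le_card hsub
        _ ≤ cutF.card := Finset.card_image_le
        _ ≤ 2 := hcut
  -- double counting
  have hdouble : 2 * Bf.card ≤ 2 * EI.card := by
    calc 2 * Bf.card = ∑ _b ∈ Bf, 2 := by rw [Finset.sum_const, smul_eq_mul, mul_comm]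
      _ ≤ ∑ b ∈ Bf, (EI.filter (fun e => Cross b e)).card := Finset.sum_le_sum hlower
      _ = ∑ b ∈ Bf, ∑ e ∈ EI, (if Cross b e then 1 else 0) := by
          apply Finset.sum_congr rfl
          intro b _
          rw [Finset.card_filter]
      _ = ∑ e ∈ EI, ∑ b ∈ Bf, (if Cross b e then 1 else 0) := Finset.sum_comm
      _ = ∑ e ∈ EI, (Bf.filter (fun b => Cross b e)).card := by
          apply Finset.sum_congr rfl
          intro e _
          rw [Finset.card_filter]
      _ ≤ ∑ _e ∈ EI, 2 := Finset.sum_le_sum hupper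
      _ = 2 * EI.card := by rw [Finset.sum_const, smul_eq_mul, mul_comm]
  omega

end HalinGraph

/-- Every `17`-vertex `C₄`-free Halin graph has at most `26` edges. -/
theorem halin_seventeen {V : Type*} [Fintype V] (hcard : Fintype.card V = 17)
    (H : HalinGraph V) (hfree : C4Free H.graph) :
    eCount H.graph ≤ 26 := by
  classical
  have hleaf := H.leaf_le_ten hcard hfree
  -- the tree and cycle edge sets are disjoint
  have hdisj : Disjoint H.T.edgeSet H.C.edgeSet := by
    rw [Set.disjoint_left]
    intro e heT heC
    induction e using Sym2.ind with
    | _ a b =>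
      rw [SimpleGraph.mem_edgeSet] at heT heC
      have ha := H.leaf_of_cadj heC
      have hb := H.leaf_of_cadj heC.symm
      have hba : b = H.par a := H.eq_par ha heT
      exact H.par_not_leaf ha (hba ▸ hb)
  have hsplit : eCount H.graph = eCount H.T + eCount H.C := by
    show (H.T ⊔ H.C).edgeSet.ncard = _
    rw [SimpleGraph.edgeSet_sup]
    exact Set.ncard_union_eq hdisj (Set.toFinite _) (Set.toFinite _)
  -- the tree has 16 edges
  have hT : eCount H.T = 16 := by
    show H.T.edgeSet.ncard = 16
    rw [Set.ncard_eq_toFinset_card', ← SimpleGraph.edgeFinset]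
    have h := H.tree_isTree.card_edgeFinset
    omega
  -- the cycle has one edge per leaf
  have hC : eCount H.C ≤ 10 := by
    have hhs := H.C.sum_degrees_eq_twice_card_edges
    have hsum : ∑ v : V, H.C.degree v
        = 2 * (Finset.univ.filter (fun v => v ∈ H.C.support)).card := by
      rw [← Finset.sum_filter_add_sum_filter_not Finset.univ (fun v => v ∈ H.C.support)]
      have h1 : ∑ v ∈ Finset.univ.filter (fun v => v ∈ H.C.support), H.C.degree v
          = 2 * (Finset.univ.filter (fun v => v ∈ H.C.support)).card := by
        rw [Finset.sum_congr rfl (fun v hv => ?_), Finset.sum_const, smul_eq_mul, mul_comm]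
        rw [Finset.mem_filter] at hv
        have h2 := H.two_regular v hv.2
        unfold ncDeg at h2
        rwa [Set.ncard_eq_toFinset_card', ← SimpleGraph.neighborFinset_def] at h2
      have h2 : ∑ v ∈ Finset.univ.filter (fun v => ¬ v ∈ H.C.support), H.C.degree v = 0 := by
        apply Finset.sum_eq_zero
        intro v hv
        rw [Finset.mem_filter] at hv
        rw [SimpleGraph.degree, Finset.card_eq_zero, Finset.eq_empty_iff_forall_notMem]
        intro w hw
        rw [SimpleGraph.mem_neighborFinset] at hw
        exact hv.2 ⟨w, hw⟩
      rw [h1, h2, add_zero]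
    rw [hsum] at hhs
    have hEC : eCount H.C = (Finset.univ.filter (fun v => v ∈ H.C.support)).card := by
      show H.C.edgeSet.ncard = _
      rw [Set.ncard_eq_toFinset_card', ← SimpleGraph.edgeFinset]
      omega
    have hLcard : (Finset.univ.filter (fun v => v ∈ H.C.support)).card
        = {x : V | IsLeaf H.T x}.ncard := by
      rw [Set.ncard_eq_toFinset_card']
      congr 1
      ext x
      simp [H.support_C]
    rw [hEC, hLcard]
    exact hleaf
  omega
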